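/- arXiv:1112.0421 — 2 statements merged into one kernel-verified Lean document; each statement's English description precedes it below -/
import Mathlib

section
/- Let U = (1/√2)·!![1, −1; 1, 1] (rotation of each qubit around the y axis by π/2) and n ≥ 1. For each b ∈ ZMod 2, averaging the conjugation by all Hadamard patterns over the rotated state σ_b yields ρ_b: (1/2^n) Σ_{k : Fin n → ZMod 2} H_k * (U^{⊗n} * σ_b * (U^{⊗n})ᴴ) * H_kᴴ = ρ_b, where U^{⊗n} = ⨂_l U. -/
open Matrix Finset

/-- Parity of a bit string. -/
def parity {n : ℕ} (ν : Fin n → ZMod 2) : ZMod 2 := ∑ l, ν l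

/-- Tensor product of a family of one-qubit matrices, as a matrix indexed by bit strings. -/
def tens {n : ℕ} (A : Fin n → Matrix (ZMod 2) (ZMod 2) ℂ) :
    Matrix (Fin n → ZMod 2) (Fin n → ZMod 2) ℂ :=
  Matrix.of fun x y => ∏ l, A l (x l) (y l)

/-- The Hadamard matrix. -/
noncomputable def Hmat : Matrix (ZMod 2) (ZMod 2) ℂ :=
  (1 / Real.sqrt 2 : ℝ) • !![1, 1; 1, -1]

/-- The Hadamard pattern `H_k = ⨂_l H^{k l}`. -/
noncomputable def Hpat {n : ℕ} (k : Fin n → ZMod 2) :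
    Matrix (Fin n → ZMod 2) (Fin n → ZMod 2) ℂ :=
  tens (fun l => Hmat ^ (k l).val)

/-- Rotation of one qubit around the y axis by `π/2`. -/
noncomputable def Urot : Matrix (ZMod 2) (ZMod 2) ℂ :=
  (1 / Real.sqrt 2 : ℝ) • !![1, -1; 1, 1]

/-- `P 0 = |0⟩⟨0|`, `P 1 = |+⟩⟨+|`. -/
noncomputable def projP (b : ZMod 2) : Matrix (ZMod 2) (ZMod 2) ℂ :=
  if b = 0 then !![1, 0; 0, 0] else (1 / 2 : ℂ) • !![1, 1; 1, 1]

/-- The parity-conditioned ensemble state `σ_b`. -/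
noncomputable def sigma (n : ℕ) (b : ZMod 2) :
    Matrix (Fin n → ZMod 2) (Fin n → ZMod 2) ℂ :=
  (1 / 2 ^ (n - 1) : ℂ) •
    ∑ j ∈ Finset.univ.filter (fun j : Fin n → ZMod 2 => parity j = b),
      tens (fun l => projP (j l))

/-- The four conjugate-coding states `ψ_{ij} = H^j X^i |0⟩`. -/
noncomputable def psi (i j : ZMod 2) : ZMod 2 → ℂ :=
  if j = 0 then (if i = 0 then ![1, 0] else ![0, 1])
  else if i = 0 then (1 / Real.sqrt 2 : ℝ) • ![1, 1]
  else (1 / Real.sqrt 2 : ℝ) • ![1, -1]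

/-- The rank-one projector `|ψ_{ij}⟩⟨ψ_{ij}|`. -/
noncomputable def projQ (i j : ZMod 2) : Matrix (ZMod 2) (ZMod 2) ℂ :=
  Matrix.vecMulVec (psi i j) (star (psi i j))

/-- The ciphertext state `ρ_b` of the one-bit message `b`. -/
noncomputable def rho (n : ℕ) (b : ZMod 2) :
    Matrix (Fin n → ZMod 2) (Fin n → ZMod 2) ℂ :=
  (1 / 2 ^ (2 * n - 1) : ℂ) •
    ∑ i ∈ Finset.univ.filter (fun i : Fin n → ZMod 2 => parity i = b),
      ∑ j : Fin n → ZMod 2, tens (fun l => projQ (i l) (j l))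


section Aux

lemma zmod2_cases (z : ZMod 2) : z = 0 ∨ z = 1 := by revert z; decide

lemma sum_zmod2 (f : ZMod 2 → ℂ) : ∑ z, f z = f 0 + f 1 := by
  have h : (Finset.univ : Finset (ZMod 2)) = {0, 1} := by decide
  rw [h, Finset.sum_insert (by decide), Finset.sum_singleton]

@[simp] lemma m00' (a b c d : ℂ) : !![a,b;c,d] (0:ZMod 2) (0:ZMod 2) = a := rfl
@[simp] lemma m01' (a b c d : ℂ) : !![a,b;c,d] (0:ZMod 2) (1:ZMod 2) = b := rfl
@[simp] lemma m10' (a b c d : ℂ) : !![a,b;c,d] (1:ZMod 2) (0:ZMod 2) = c := rfl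
@[simp] lemma m11' (a b c d : ℂ) : !![a,b;c,d] (1:ZMod 2) (1:ZMod 2) = d := rfl
@[simp] lemma v0' (a b : ℂ) : ![a,b] (0:ZMod 2) = a := rfl
@[simp] lemma v1' (a b : ℂ) : ![a,b] (1:ZMod 2) = b := rfl
@[simp] lemma zval0' : (0:ZMod 2).val = 0 := rfl
@[simp] lemma zval1' : (1:ZMod 2).val = 1 := rfl
@[simp] lemma zne' : (1:ZMod 2) ≠ 0 := by decide

lemma U00' : Urot 0 0 = (1 / Real.sqrt 2 : ℝ) • (1:ℂ) := rfl
lemma U01' : Urot 0 1 = (1 / Real.sqrt 2 : ℝ) • (-1:ℂ) := rfl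
lemma U10' : Urot 1 0 = (1 / Real.sqrt 2 : ℝ) • (1:ℂ) := rfl
lemma U11' : Urot 1 1 = (1 / Real.sqrt 2 : ℝ) • (1:ℂ) := rfl
lemma H00' : Hmat 0 0 = (1 / Real.sqrt 2 : ℝ) • (1:ℂ) := rfl
lemma H01' : Hmat 0 1 = (1 / Real.sqrt 2 : ℝ) • (1:ℂ) := rfl
lemma H10' : Hmat 1 0 = (1 / Real.sqrt 2 : ℝ) • (1:ℂ) := rfl
lemma H11' : Hmat 1 1 = (1 / Real.sqrt 2 : ℝ) • (-1:ℂ) := rfl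
lemma P000' : projP 0 0 0 = 1 := rfl
lemma P001' : projP 0 0 1 = 0 := rfl
lemma P010' : projP 0 1 0 = 0 := rfl
lemma P011' : projP 0 1 1 = 0 := rfl
lemma P100' : projP 1 0 0 = (1 / 2 : ℂ) • 1 := rfl
lemma P101' : projP 1 0 1 = (1 / 2 : ℂ) • 1 := rfl
lemma P110' : projP 1 1 0 = (1 / 2 : ℂ) • 1 := rfl
lemma P111' : projP 1 1 1 = (1 / 2 : ℂ) • 1 := rfl
lemma S000' : psi 0 0 0 = 1 := rfl
lemma S001' : psi 0 0 1 = 0 := rfl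
lemma S100' : psi 1 0 0 = 0 := rfl
lemma S101' : psi 1 0 1 = 1 := rfl
lemma S010' : psi 0 1 0 = (1 / Real.sqrt 2 : ℝ) • (1:ℂ) := rfl
lemma S011' : psi 0 1 1 = (1 / Real.sqrt 2 : ℝ) • (1:ℂ) := rfl
lemma S110' : psi 1 1 0 = (1 / Real.sqrt 2 : ℝ) • (1:ℂ) := rfl
lemma S111' : psi 1 1 1 = (1 / Real.sqrt 2 : ℝ) • (-1:ℂ) := rfl
lemma O01' : (1 : Matrix (ZMod 2) (ZMod 2) ℂ) 0 1 = 0 := rfl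
lemma O10' : (1 : Matrix (ZMod 2) (ZMod 2) ℂ) 1 0 = 0 := rfl
lemma O00' : (1 : Matrix (ZMod 2) (ZMod 2) ℂ) 0 0 = 1 := rfl
lemma O11' : (1 : Matrix (ZMod 2) (ZMod 2) ℂ) 1 1 = 1 := rfl

lemma mul_apply2 (M N : Matrix (ZMod 2) (ZMod 2) ℂ) (a c : ZMod 2) :
    (M * N) a c = M a 0 * N 0 c + M a 1 * N 1 c := by
  rw [Matrix.mul_apply, sum_zmod2]

lemma mat_ext {M N : Matrix (ZMod 2) (ZMod 2) ℂ} (h00 : M 0 0 = N 0 0) (h01 : M 0 1 = N 0 1)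
    (h10 : M 1 0 = N 1 0) (h11 : M 1 1 = N 1 1) : M = N := by
  ext a c
  rcases zmod2_cases a with h | h <;> rcases zmod2_cases c with h' | h' <;> subst h <;> subst h' <;>
    assumption

lemma tens_mul {n : ℕ} (A B : Fin n → Matrix (ZMod 2) (ZMod 2) ℂ) :
    tens A * tens B = tens (fun l => A l * B l) := by
  ext x y
  simp only [tens, Matrix.mul_apply, Matrix.of_apply]
  rw [Fintype.prod_sum (fun l (z : ZMod 2) => A l (x l) z * B l z (y l))]
  exact Finset.sum_congr rfl fun z _ => by rw [Finset.prod_mul_distrib]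

lemma tens_conjTranspose {n : ℕ} (A : Fin n → Matrix (ZMod 2) (ZMod 2) ℂ) :
    (tens A)ᴴ = tens (fun l => (A l)ᴴ) := by
  ext x y
  simp [tens, Matrix.conjTranspose_apply]

lemma conj_tens {n : ℕ} (U M : Fin n → Matrix (ZMod 2) (ZMod 2) ℂ) :
    tens U * tens M * (tens U)ᴴ = tens (fun l => U l * M l * (U l)ᴴ) := by
  rw [tens_conjTranspose, tens_mul, tens_mul]

set_option maxHeartbeats 1000000 in
lemma key (j k : ZMod 2) :
    Hmat ^ k.val * (Urot * projP j * Urotᴴ) * (Hmat ^ k.val)ᴴ = projQ j (j + k + 1) := by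
  have hs : (Real.sqrt 2 : ℂ) * Real.sqrt 2 = 2 := by
    rw [← Complex.ofReal_mul, Real.mul_self_sqrt (by norm_num)]; norm_num
  have hs0 : (Real.sqrt 2 : ℂ) ≠ 0 := by
    simp [Real.sqrt_eq_zero']
  have h2 : (Real.sqrt 2 : ℂ) ^ 2 = 2 := by rw [sq, hs]
  have h3 : (Real.sqrt 2 : ℂ) ^ 3 = 2 * Real.sqrt 2 := by rw [pow_succ, h2]
  have h4 : (Real.sqrt 2 : ℂ) ^ 4 = 4 := by rw [show 4 = 2+2 from rfl, pow_add, h2]; norm_num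
  have hinv : (Real.sqrt 2 : ℂ)⁻¹ = Real.sqrt 2 / 2 := by field_simp; rw [h2]
  rcases zmod2_cases j with h | h <;> rcases zmod2_cases k with h' | h' <;> subst h <;> subst h'
  · rw [show (0+0+1 : ZMod 2) = 1 from by decide]
    apply mat_ext <;>
      · simp only [mul_apply2, pow_zero, pow_one, Matrix.conjTranspose_apply, Matrix.one_apply,
          projQ, Matrix.vecMulVec_apply, U00', U01', U10', U11', H00', H01', H10', H11',
          P000', P001', P010', P011', P100', P101', P110', P111', S000', S001', S100', S101',
          S010', S011', S110', S111', O00', O01', O10', O11', Pi.star_apply,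
          Matrix.smul_apply, Complex.real_smul, smul_eq_mul, if_true, zne', if_false,
          ite_true, ite_false, m00', m01', m10', m11', v0', v1', zval0', zval1',
          _root_.map_mul, _root_.map_one,
          Complex.ofReal_div, Complex.ofReal_one, map_inv₀, Complex.conj_ofReal, map_div₀,
          one_ne_zero]
        field_simp
        try ring_nf
        try simp only [inv_pow, h2, h3, h4]
        try norm_num
        try ring
        try (simp only [hinv]; ring_nf; try simp only [h2, h3, h4])
  · rw [show (0+1+1 : ZMod 2) = 0 from by decide]
    apply mat_ext <;>
      · simp only [mul_apply2, pow_zero, pow_one, Matrix.conjTranspose_apply, Matrix.one_apply,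
          projQ, Matrix.vecMulVec_apply, U00', U01', U10', U11', H00', H01', H10', H11',
          P000', P001', P010', P011', P100', P101', P110', P111', S000', S001', S100', S101',
          S010', S011', S110', S111', O00', O01', O10', O11', Pi.star_apply,
          Matrix.smul_apply, Complex.real_smul, smul_eq_mul, if_true, zne', if_false,
          ite_true, ite_false, m00', m01', m10', m11', zval0', zval1', v0', v1',
          _root_.map_mul, _root_.map_one,
          Complex.ofReal_div, Complex.ofReal_one, map_inv₀, Complex.conj_ofReal, map_div₀,
          one_ne_zero]
        field_simp
        try ring_nf
        try simp only [inv_pow, h2, h3, h4]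
        try norm_num
        try ring
        try (simp only [hinv]; ring_nf; try simp only [h2, h3, h4])
  · rw [show (1+0+1 : ZMod 2) = 0 from by decide]
    apply mat_ext <;>
      · simp only [mul_apply2, pow_zero, pow_one, Matrix.conjTranspose_apply, Matrix.one_apply,
          projQ, Matrix.vecMulVec_apply, U00', U01', U10', U11', H00', H01', H10', H11',
          P000', P001', P010', P011', P100', P101', P110', P111', S000', S001', S100', S101',
          S010', S011', S110', S111', O00', O01', O10', O11', Pi.star_apply,
          Matrix.smul_apply, Complex.real_smul, smul_eq_mul, if_true, zne', if_false,
          ite_true, ite_false, m00', m01', m10', m11', zval0', zval1', v0', v1',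
          _root_.map_mul, _root_.map_one,
          Complex.ofReal_div, Complex.ofReal_one, map_inv₀, Complex.conj_ofReal, map_div₀,
          one_ne_zero]
        field_simp
        try ring_nf
        try simp only [inv_pow, h2, h3, h4]
        try norm_num
        try ring
        try (simp only [hinv]; ring_nf; try simp only [h2, h3, h4])
  · rw [show (1+1+1 : ZMod 2) = 1 from by decide]
    apply mat_ext <;>
      · simp only [mul_apply2, pow_zero, pow_one, Matrix.conjTranspose_apply, Matrix.one_apply,
          projQ, Matrix.vecMulVec_apply, U00', U01', U10', U11', H00', H01', H10', H11',
          P000', P001', P010', P011', P100', P101', P110', P111', S000', S001', S100', S101',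
          S010', S011', S110', S111', O00', O01', O10', O11', Pi.star_apply,
          Matrix.smul_apply, Complex.real_smul, smul_eq_mul, if_true, zne', if_false,
          ite_true, ite_false, m00', m01', m10', m11', zval0', zval1', v0', v1',
          _root_.map_mul, _root_.map_one,
          Complex.ofReal_div, Complex.ofReal_one, map_inv₀, Complex.conj_ofReal, map_div₀,
          one_ne_zero]
        field_simp
        try ring_nf
        try simp only [inv_pow, h2, h3, h4]
        try norm_num
        try ring
        try (simp only [hinv]; ring_nf; try simp only [h2, h3, h4])

end Aux

/-- Averaging conjugation by all Hadamard patterns over the rotated state `σ_b` yields `ρ_b`. -/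
theorem hadamard_average_of_rotated_sigma (n : ℕ) (hn : 1 ≤ n) (b : ZMod 2) :
    (1 / 2 ^ n : ℂ) •
        ∑ k : Fin n → ZMod 2,
          Hpat k * (tens (fun _ => Urot) * sigma n b * (tens (fun _ => Urot))ᴴ) * (Hpat k)ᴴ
      = rho n b := by
  have step : ∀ k : Fin n → ZMod 2,
      Hpat k * (tens (fun _ => Urot) * sigma n b * (tens (fun _ => Urot))ᴴ) * (Hpat k)ᴴ
        = (1 / 2 ^ (n-1) : ℂ) •
            ∑ j ∈ Finset.univ.filter (fun j : Fin n → ZMod 2 => parity j = b),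
              tens (fun l => projQ (j l) (j l + k l + 1)) := by
    intro k
    have h1 : tens (fun _ : Fin n => Urot) * sigma n b * (tens (fun _ : Fin n => Urot))ᴴ
        = (1 / 2 ^ (n-1) : ℂ) •
            ∑ j ∈ Finset.univ.filter (fun j : Fin n → ZMod 2 => parity j = b),
              tens (fun l => Urot * projP (j l) * Urotᴴ) := by
      rw [sigma, Matrix.mul_smul, Matrix.smul_mul, Finset.mul_sum, Finset.sum_mul]
      congr 1
      exact Finset.sum_congr rfl fun j _ => conj_tens _ _
    rw [h1, Matrix.mul_smul, Matrix.smul_mul, Finset.mul_sum, Finset.sum_mul]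
    congr 1
    refine Finset.sum_congr rfl fun j _ => ?_
    rw [Hpat, conj_tens]
    exact congrArg tens (funext fun l => key (j l) (k l))
  calc (1 / 2 ^ n : ℂ) •
        ∑ k : Fin n → ZMod 2,
          Hpat k * (tens (fun _ => Urot) * sigma n b * (tens (fun _ => Urot))ᴴ) * (Hpat k)ᴴ
      = (1 / 2 ^ n : ℂ) • ∑ k : Fin n → ZMod 2, (1 / 2 ^ (n-1) : ℂ) •
          ∑ j ∈ Finset.univ.filter (fun j : Fin n → ZMod 2 => parity j = b),
            tens (fun l => projQ (j l) (j l + k l + 1)) := by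
        rw [Finset.sum_congr rfl fun k _ => step k]
    _ = (1 / 2 ^ (2*n-1) : ℂ) •
          ∑ j ∈ Finset.univ.filter (fun j : Fin n → ZMod 2 => parity j = b),
            ∑ k : Fin n → ZMod 2, tens (fun l => projQ (j l) (j l + k l + 1)) := by
        rw [← Finset.smul_sum, smul_smul, Finset.sum_comm]
        congr 1
        rw [div_mul_div_comm, one_mul, ← pow_add]
        congr 2
        omega
    _ = rho n b := by
        rw [rho]
        congr 1
        refine Finset.sum_congr rfl fun j _ => ?_
        have hinv : Function.Involutive
            (fun k : Fin n → ZMod 2 => fun l => j l + k l + 1) := by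
          intro k
          funext l
          simp only []
          have : ∀ a c : ZMod 2, a + (a + c + 1) + 1 = c := by decide
          exact this (j l) (k l)
        exact Fintype.sum_bijective _ hinv.bijective _ _ fun k => rfl
end

section
/- Key-extraction attack on the entanglement-based public key: for all bit strings i, k, y of length n, if the y-component of H^{⊗n} applied to e_i + e_{i+k} is nonzero, then Σ_l (y l)·(k l) = 0 in ZMod 2 (the measurement outcome y satisfies the linear equation y · k = 0). -/
open Matrix Finset

noncomputable def chi (a : ZMod 2) : ℂ := (-1) ^ a.val

lemma chi_add (a b : ZMod 2) : chi (a + b) = chi a * chi b := by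
  rcases (by revert a; decide : a = 0 ∨ a = 1) with rfl | rfl <;>
    rcases (by revert b; decide : b = 0 ∨ b = 1) with rfl | rfl <;> simp [chi] <;>
    norm_num [show ((2:ZMod 2)).val = 0 from rfl, show ((1:ZMod 2)).val = 1 from rfl]

lemma chi_prod {ι : Type*} (s : Finset ι) (f : ι → ZMod 2) :
    ∏ l ∈ s, chi (f l) = chi (∑ l ∈ s, f l) := by
  induction s using Finset.cons_induction with
  | empty => simp [chi]
  | cons a s ha ih => simp [Finset.prod_cons, Finset.sum_cons, chi_add, ih]

lemma Hmat_apply (a b : ZMod 2) :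
    Hmat a b = ((1 / Real.sqrt 2 : ℝ) : ℂ) * chi (a * b) := by
  have e : ∀ x y : ZMod 2, (!![(1:ℂ), 1; 1, -1] : Matrix (ZMod 2) (ZMod 2) ℂ) x y = chi (x * y) := by
    intro x y
    rcases (by revert x; decide : x = 0 ∨ x = 1) with rfl | rfl <;>
      rcases (by revert y; decide : y = 0 ∨ y = 1) with rfl | rfl <;>
      simp [chi] <;> norm_num [show ((1:ZMod 2)).val = 1 from rfl] <;> rfl
  unfold Hmat
  erw [Matrix.smul_apply, e, Complex.real_smul]

lemma tens_H_apply {n : ℕ} (x z : Fin n → ZMod 2) :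
    (tens fun _ : Fin n => Hmat) x z =
      ((1 / Real.sqrt 2 : ℝ) : ℂ) ^ n * chi (∑ l, x l * z l) := by
  simp only [tens, Matrix.of_apply, Hmat_apply, Finset.prod_mul_distrib,
    Finset.prod_const, Finset.card_univ, Fintype.card_fin, chi_prod]

/-- If the outcome `y` of measuring `H^{⊗n} (e_i + e_{i⊕k})` has nonzero amplitude,
then `y · k = 0` in `ZMod 2`. -/
theorem measurement_outcome_orthogonal {n : ℕ} (i k y : Fin n → ZMod 2)
    (h : ((tens fun _ : Fin n => Hmat) *ᵥ
        (Pi.single i (1 : ℂ) + Pi.single (i + k) (1 : ℂ))) y ≠ 0) :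
    ∑ l, y l * k l = 0 := by
  by_contra hk
  have hk1 : ∑ l, y l * k l = 1 := by
    have : ∀ a : ZMod 2, a ≠ 0 → a = 1 := by decide
    exact this _ hk
  apply h
  have hadd : (∑ l, y l * (i + k) l) = (∑ l, y l * i l) + ∑ l, y l * k l := by
    rw [← Finset.sum_add_distrib]
    exact Finset.sum_congr rfl fun l _ => by simp [Pi.add_apply, mul_add]
  rw [Matrix.mulVec_add, Pi.add_apply, Matrix.mulVec_single_one, Matrix.mulVec_single_one]
  simp only [mul_one, Matrix.col_apply, tens_H_apply, hadd, hk1, chi_add]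
  have : chi 1 = -1 := by norm_num [chi, show ((1:ZMod 2)).val = 1 from rfl]
  rw [this]
  ring
end
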